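/- Let X be a Banach space and T a nonzero bounded operator with numerical radius norm. Suppose that whenever T ⊥_B^w A, every sequence (x_n, x_n*) in J with x_n*(T x_n) → σ, |σ| = ‖T‖_w, has the property that every subsequential limit of (x_n*(A x_n)) is zero. Then T is nu-smooth: T ⊥_B^w A and T ⊥_B^w B imply T ⊥_B^w (A + B). -/

import Mathlib

open Filter Topology

/-- The numerical radius of a bounded linear operator. -/
noncomputable def nrad {𝕜 X : Type*} [RCLike 𝕜] [NormedAddCommGroup X] [NormedSpace 𝕜 X]
    (T : X →L[𝕜] X) : ℝ :=
  sSup {r : ℝ | ∃ (x : X) (f : X →L[𝕜] 𝕜), ‖x‖ = 1 ∧ ‖f‖ = 1 ∧ f x = 1 ∧ r = ‖f (T x)‖}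

lemma nradSet_bddAbove {𝕜 X : Type*} [RCLike 𝕜] [NormedAddCommGroup X] [NormedSpace 𝕜 X]
    (T : X →L[𝕜] X) :
    BddAbove {r : ℝ | ∃ (x : X) (f : X →L[𝕜] 𝕜), ‖x‖ = 1 ∧ ‖f‖ = 1 ∧ f x = 1 ∧ r = ‖f (T x)‖} := by
  refine ⟨‖T‖, ?_⟩
  rintro r ⟨x, f, hx, hf, hfx, rfl⟩
  calc ‖f (T x)‖ ≤ ‖f‖ * ‖T x‖ := f.le_opNorm _
    _ ≤ 1 * (‖T‖ * ‖x‖) := by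
        rw [hf]; gcongr; exact T.le_opNorm _
    _ = ‖T‖ := by rw [hx]; ring

lemma le_nrad {𝕜 X : Type*} [RCLike 𝕜] [NormedAddCommGroup X] [NormedSpace 𝕜 X]
    (T : X →L[𝕜] X) (x : X) (f : X →L[𝕜] 𝕜) (hx : ‖x‖ = 1) (hf : ‖f‖ = 1) (hfx : f x = 1) :
    ‖f (T x)‖ ≤ nrad T :=
  le_csSup (nradSet_bddAbove T) ⟨x, f, hx, hf, hfx, rfl⟩

/-- if for every `A` with `T ⊥_B^w A` and every sequence `(x_n, x_n*) ∈ J`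
with `x_n*(T x_n) → σ`, `|σ| = ‖T‖_w`, every subsequential limit of `(x_n*(A x_n))` is
zero, then `T` is nu-smooth. -/
theorem nu_smooth_of_subsequential_limits (𝕜 X : Type*) [RCLike 𝕜] [NormedAddCommGroup X]
    [NormedSpace 𝕜 X] [CompleteSpace X] (T : X →L[𝕜] X) (hT : T ≠ 0)
    (h : ∀ A : X →L[𝕜] X, (∀ lam : 𝕜, nrad T ≤ nrad (T + lam • A)) →
      ∀ (x : ℕ → X) (f : ℕ → X →L[𝕜] 𝕜),
        (∀ n, ‖x n‖ = 1 ∧ ‖f n‖ = 1 ∧ f n (x n) = 1) →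
        ∀ σ : 𝕜, Tendsto (fun n => f n (T (x n))) atTop (𝓝 σ) → ‖σ‖ = nrad T →
        ∀ (φ : ℕ → ℕ), StrictMono φ → ∀ L : 𝕜,
          Tendsto (fun k => f (φ k) (A (x (φ k)))) atTop (𝓝 L) → L = 0) :
    ∀ A B : X →L[𝕜] X, (∀ lam : 𝕜, nrad T ≤ nrad (T + lam • A)) →
      (∀ lam : 𝕜, nrad T ≤ nrad (T + lam • B)) →
      (∀ lam : 𝕜, nrad T ≤ nrad (T + lam • (A + B))) := by
  intro A B hA hB lam
  -- X is nontrivial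
  obtain ⟨v, hv⟩ : ∃ v, T v ≠ 0 := by
    by_contra h'
    push_neg at h'
    exact hT (ContinuousLinearMap.ext fun v => by simpa using h' v)
  have hv0 : v ≠ 0 := fun h0 => hv (by simp [h0])
  set u : X := ((‖v‖ : 𝕜))⁻¹ • v with hu_def
  have hnv : (‖v‖ : ℝ) ≠ 0 := norm_ne_zero_iff.2 hv0
  have hu : ‖u‖ = 1 := by
    rw [hu_def, norm_smul, norm_inv, RCLike.norm_ofReal, abs_of_nonneg (norm_nonneg v),
      inv_mul_cancel₀ hnv]
  have hu0 : u ≠ 0 := by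
    intro h0
    rw [h0, norm_zero] at hu
    norm_num at hu
  obtain ⟨g, hg1, hg2⟩ := exists_dual_vector 𝕜 u (norm_ne_zero_iff.2 hu0)
  have hg2' : g u = 1 := by rw [hg2, hu, RCLike.ofReal_one]
  have S_ne : ∀ T' : X →L[𝕜] X,
      ({r : ℝ | ∃ (x : X) (f : X →L[𝕜] 𝕜), ‖x‖ = 1 ∧ ‖f‖ = 1 ∧ f x = 1 ∧
        r = ‖f (T' x)‖}).Nonempty :=
    fun T' => ⟨‖g (T' u)‖, u, g, hu, hg1, hg2', rfl⟩
  -- a sequence attaining nrad T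
  obtain ⟨r, -, hr_tendsto, hr_mem⟩ := exists_seq_tendsto_sSup (S_ne T) (nradSet_bddAbove T)
  choose x f hx hf hfx hr using hr_mem
  -- extract subsequences
  have haball : ∀ n, f n (T (x n)) ∈ Metric.closedBall (0 : 𝕜) ‖T‖ := by
    intro n
    rw [Metric.mem_closedBall, dist_zero_right]
    calc ‖f n (T (x n))‖ ≤ ‖f n‖ * ‖T (x n)‖ := (f n).le_opNorm _
      _ ≤ 1 * (‖T‖ * ‖x n‖) := by rw [hf]; gcongr; exact T.le_opNorm _
      _ = ‖T‖ := by rw [hx]; ring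
  obtain ⟨σ, -, φ1, hφ1, hσ⟩ :=
    (isCompact_closedBall (0 : 𝕜) ‖T‖).tendsto_subseq haball
  have hAball : ∀ k, f (φ1 k) (A (x (φ1 k))) ∈ Metric.closedBall (0 : 𝕜) ‖A‖ := by
    intro k
    rw [Metric.mem_closedBall, dist_zero_right]
    calc ‖f (φ1 k) (A (x (φ1 k)))‖ ≤ ‖f (φ1 k)‖ * ‖A (x (φ1 k))‖ := (f _).le_opNorm _
      _ ≤ 1 * (‖A‖ * ‖x (φ1 k)‖) := by rw [hf]; gcongr; exact A.le_opNorm _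
      _ = ‖A‖ := by rw [hx]; ring
  obtain ⟨a0, -, φ2, hφ2, ha0⟩ :=
    (isCompact_closedBall (0 : 𝕜) ‖A‖).tendsto_subseq hAball
  have hBball : ∀ k, f (φ1 (φ2 k)) (B (x (φ1 (φ2 k)))) ∈ Metric.closedBall (0 : 𝕜) ‖B‖ := by
    intro k
    rw [Metric.mem_closedBall, dist_zero_right]
    calc ‖f (φ1 (φ2 k)) (B (x (φ1 (φ2 k))))‖ ≤ ‖f (φ1 (φ2 k))‖ * ‖B (x (φ1 (φ2 k)))‖ :=
        (f _).le_opNorm _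
      _ ≤ 1 * (‖B‖ * ‖x (φ1 (φ2 k))‖) := by rw [hf]; gcongr; exact B.le_opNorm _
      _ = ‖B‖ := by rw [hx]; ring
  obtain ⟨b0, -, φ3, hφ3, hb0⟩ :=
    (isCompact_closedBall (0 : 𝕜) ‖B‖).tendsto_subseq hBball
  set ψ : ℕ → ℕ := φ1 ∘ φ2 ∘ φ3 with hψ_def
  have hψ : StrictMono ψ := hφ1.comp (hφ2.comp hφ3)
  have hJ : ∀ n, ‖x (ψ n)‖ = 1 ∧ ‖f (ψ n)‖ = 1 ∧ f (ψ n) (x (ψ n)) = 1 :=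
    fun n => ⟨hx _, hf _, hfx _⟩
  have hTψ : Tendsto (fun n => f (ψ n) (T (x (ψ n)))) atTop (𝓝 σ) :=
    hσ.comp ((hφ2.comp hφ3).tendsto_atTop)
  have hAψ : Tendsto (fun n => f (ψ n) (A (x (ψ n)))) atTop (𝓝 a0) :=
    ha0.comp hφ3.tendsto_atTop
  have hBψ : Tendsto (fun n => f (ψ n) (B (x (ψ n)))) atTop (𝓝 b0) := hb0
  -- norm of σ is nrad T
  have hσ_norm : ‖σ‖ = nrad T := by
    have h1 : Tendsto (fun n => ‖f (ψ n) (T (x (ψ n)))‖) atTop (𝓝 ‖σ‖) := hTψ.norm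
    have h2 : Tendsto (fun n => ‖f (ψ n) (T (x (ψ n)))‖) atTop (𝓝 (nrad T)) := by
      have : Tendsto (fun n => r (ψ n)) atTop (𝓝 (nrad T)) :=
        hr_tendsto.comp hψ.tendsto_atTop
      exact this.congr fun n => (hr (ψ n))
    exact tendsto_nhds_unique h1 h2
  have ha0_zero : a0 = 0 := h A hA _ _ hJ σ hTψ hσ_norm id strictMono_id a0 hAψ
  have hb0_zero : b0 = 0 := h B hB _ _ hJ σ hTψ hσ_norm id strictMono_id b0 hBψ
  -- conclude
  have hsum : Tendsto (fun n => f (ψ n) ((T + lam • (A + B)) (x (ψ n)))) atTop (𝓝 σ) := by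
    have : Tendsto (fun n => f (ψ n) (T (x (ψ n))) + lam * (f (ψ n) (A (x (ψ n))) +
        f (ψ n) (B (x (ψ n))))) atTop (𝓝 (σ + lam * (a0 + b0))) :=
      hTψ.add ((hAψ.add hBψ).const_mul lam)
    rw [ha0_zero, hb0_zero] at this
    simp only [add_zero, mul_zero] at this
    refine this.congr fun n => ?_
    simp [mul_add]
  calc nrad T = ‖σ‖ := hσ_norm.symm
    _ ≤ nrad (T + lam • (A + B)) := by
        refine le_of_tendsto' hsum.norm fun n => ?_
        exact le_nrad _ _ _ (hx _) (hf _) (hfx _)
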